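/- The product and coproduct on the P-basis are compatible: for λ ∈ D_{2k}(q) and μ ∈ D_{2(n-k)}(q), Δ(P_λ · P_μ) = Δ(P_λ) · Δ(P_μ), where the product on SC^D ⊗ SC^D is componentwise. Consequently SC^D is a graded connected bialgebra, hence a Hopf algebra. -/

import Mathlib

open Finset
open scoped Classical

noncomputable section

/-- A labelled arc `(i, j, a)` on `[±n]` with label `a`. -/
abbrev Arc (F : Type*) := ℤ × ℤ × F

/-- Position of `i ∈ [±n] = {1,…,n,-n,…,-1}` in the total order
`1 ≺ ⋯ ≺ n ≺ -n ≺ ⋯ ≺ -1` (so `posD n i = i` for `i > 0` and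
`posD n (-m) = 2n + 1 - m`). -/
def posD (n : ℕ) (i : ℤ) : ℤ := if 0 < i then i else 2 * n + 1 + i

/-- `λ` is a `D_{2n}(q)`-partition of `[±n]`: a set of labelled arcs `(i,j,a)` with
`i, j ∈ [±n]`, `i ≺ j`, `j ≠ -i`, `a ≠ 0`, closed under the symmetry
`(i,j,a) ↦ (-j,-i,-a)`, and such that no arc `(i,k,b)` or `(k,j,b)` with
`i ≺ k ≺ j` coexists with an arc `(i,j,a)`. -/
def IsDPartition {F : Type*} [Field F] (n : ℕ) (lam : Finset (Arc F)) : Prop :=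
  ∀ i j a, (i, j, a) ∈ lam →
    1 ≤ |i| ∧ |i| ≤ (n : ℤ) ∧ 1 ≤ |j| ∧ |j| ≤ (n : ℤ) ∧ a ≠ 0 ∧
    posD n i < posD n j ∧ j ≠ -i ∧ (-j, -i, -a) ∈ lam ∧
    ∀ k b, posD n i < posD n k → posD n k < posD n j →
      (i, k, b) ∉ lam ∧ (k, j, b) ∉ lam

/-- Rank of `i` in a finite set `A ⊆ [n]` of positive integers:
the number of elements of `A` that are `≤ i`. -/
def rankIn (A : Finset ℤ) (i : ℤ) : ℤ := ((A.filter (· ≤ i)).card : ℤ)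

/-- The standardization map `st_A : ±A → [±|A|]`, the unique order-preserving
relabelling (extended arbitrarily off `±A`). -/
def stMap (A : Finset ℤ) (i : ℤ) : ℤ := if 0 < i then rankIn A i else -(rankIn A (-i))

/-- Standardization applied to a labelled arc. -/
def stArc {F : Type*} (A : Finset ℤ) : Arc F → Arc F :=
  fun t => (stMap A t.1, stMap A t.2.1, t.2.2)

/-- `λ|_A`: the arcs of `λ` with both endpoints in `±A = A ∪ (-A)`. -/
def restrictTo {F : Type*} (A : Finset ℤ) (lam : Finset (Arc F)) : Finset (Arc F) :=
  lam.filter (fun t => |t.1| ∈ A ∧ |t.2.1| ∈ A)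

/-- Relabel all arcs of `λ` via `st_A`. -/
def standardize {F : Type*} (A : Finset ℤ) (lam : Finset (Arc F)) : Finset (Arc F) :=
  lam.image (stArc A)

/-- Every arc of `λ` has both endpoints in `±A` or both in `±Aᶜ`,
i.e. `λ = λ|_A ⊔ λ|_{Aᶜ}`. -/
def Splits {F : Type*} (A : Finset ℤ) (lam : Finset (Arc F)) : Prop :=
  ∀ t ∈ lam, (|t.1| ∈ A ↔ |t.2.1| ∈ A)

/-- Shift of an index of `[±m]` into `[±(k+m)]`: `i ↦ k + i` for `i > 0` and
`-i ↦ -(k + i)`. -/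
def shiftZ (k : ℕ) (i : ℤ) : ℤ := if 0 < i then i + k else i - k

/-- Shift of a labelled arc by `k`. -/
def shiftArc {F : Type*} (k : ℕ) : Arc F → Arc F :=
  fun t => (shiftZ k t.1, shiftZ k t.2.1, t.2.2)

/-- `μ↑^k`: the shift of a `D`-partition `μ` of `[±m]` into `[±(k+m)]`, sending each arc
`(i,j,a)` with `i,j > 0` to `(k+i, k+j, a)`, each `(i,-j,a)` to `(k+i, -(k+j), a)`, and
symmetrically on negative endpoints. -/
def shiftUp {F : Type*} (k : ℕ) (mu : Finset (Arc F)) : Finset (Arc F) :=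
  mu.image (shiftArc k)

namespace DeltaPAux


lemma card_Icc_one_int (k : ℕ) : (Icc (1:ℤ) (k:ℤ)).card = k := by
  rw [Int.card_Icc]; omega

def Bp (k : ℕ) (A : Finset ℤ) : Finset ℤ := A ∩ Icc 1 (k:ℤ)
def Cp (k m : ℕ) (A : Finset ℤ) : Finset ℤ :=
  (A ∩ Icc ((k:ℤ)+1) ((k:ℤ)+(m:ℤ))).image (fun x => x - (k:ℤ))

lemma mem_Bp {k : ℕ} {A : Finset ℤ} {x : ℤ} :
    x ∈ Bp k A ↔ x ∈ A ∧ 1 ≤ x ∧ x ≤ (k:ℤ) := by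
  simp [Bp, and_assoc]

lemma mem_Cp {k m : ℕ} {A : Finset ℤ} {x : ℤ} :
    x ∈ Cp k m A ↔ (x + k) ∈ A ∧ 1 ≤ x ∧ x ≤ (m:ℤ) := by
  simp only [Cp, mem_image, mem_inter, mem_Icc]
  constructor
  · rintro ⟨y, ⟨hy, h1, h2⟩, rfl⟩
    refine ⟨by simpa using hy, by omega, by omega⟩
  · rintro ⟨h, h1, h2⟩
    exact ⟨x + k, ⟨h, by omega, by omega⟩, by ring⟩

lemma Bp_subset {k : ℕ} {A : Finset ℤ} : Bp k A ⊆ Icc 1 (k:ℤ) := inter_subset_right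

lemma Cp_subset {k m : ℕ} {A : Finset ℤ} : Cp k m A ⊆ Icc 1 (m:ℤ) := by
  intro x hx; rw [mem_Cp] at hx; rw [mem_Icc]; exact ⟨hx.2.1, hx.2.2⟩

lemma cardBp_le {k : ℕ} {A : Finset ℤ} : (Bp k A).card ≤ k := by
  have := card_le_card (Bp_subset (k := k) (A := A))
  rwa [card_Icc_one_int] at this

lemma cardCp_le {k m : ℕ} {A : Finset ℤ} : (Cp k m A).card ≤ m := by
  have := card_le_card (Cp_subset (k := k) (m := m) (A := A))
  rwa [card_Icc_one_int] at this

lemma rankIn_low {k m : ℕ} {A : Finset ℤ} (hA : A ⊆ Icc 1 ((k:ℤ)+(m:ℤ)))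
    {i : ℤ} (hi : i ≤ (k:ℤ)) : rankIn A i = rankIn (Bp k A) i := by
  unfold rankIn; congr 2
  ext x
  by_cases hx : x ∈ A
  · have hb := mem_Icc.mp (hA hx)
    simp only [mem_filter, mem_Bp, hx, true_and]
    omega
  · simp only [mem_filter, mem_Bp, hx, false_and]

lemma rankIn_high {k m : ℕ} {A : Finset ℤ} (hA : A ⊆ Icc 1 ((k:ℤ)+(m:ℤ)))
    {j : ℤ} (hj : 0 ≤ j) :
    rankIn A ((k:ℤ) + j) = (Bp k A).card + rankIn (Cp k m A) j := by
  have hsplit : A.filter (· ≤ (k:ℤ) + j)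
      = Bp k A ∪ (A ∩ Icc ((k:ℤ)+1) ((k:ℤ)+(m:ℤ))).filter (· ≤ (k:ℤ) + j) := by
    ext x
    by_cases hx : x ∈ A
    · have hb := mem_Icc.mp (hA hx)
      simp only [mem_filter, mem_union, mem_Bp, mem_inter, mem_Icc, hx, true_and]
      omega
    · simp [hx, mem_Bp]
  have hdisj : Disjoint (Bp k A)
      ((A ∩ Icc ((k:ℤ)+1) ((k:ℤ)+(m:ℤ))).filter (· ≤ (k:ℤ) + j)) := by
    rw [disjoint_left]
    intro x hx hx'
    rw [mem_Bp] at hx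
    simp only [mem_filter, mem_inter, mem_Icc] at hx'
    omega
  have himg : (Cp k m A).filter (· ≤ j)
      = ((A ∩ Icc ((k:ℤ)+1) ((k:ℤ)+(m:ℤ))).filter (· ≤ (k:ℤ) + j)).image
          (fun x => x - (k:ℤ)) := by
    rw [Cp, Finset.filter_image]
    congr 1
    apply filter_congr
    intro x _
    constructor <;> intro h <;> omega
  have hinj : Function.Injective (fun x : ℤ => x - (k:ℤ)) := fun a b h => by
    simpa using h
  unfold rankIn
  rw [hsplit, card_union_of_disjoint hdisj, himg, Finset.card_image_of_injective _ hinj]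
  push_cast; ring



lemma rank_pos {C : Finset ℤ} {x : ℤ} (hx : x ∈ C) : 1 ≤ rankIn C x := by
  unfold rankIn
  have : 0 < (C.filter (· ≤ x)).card :=
    card_pos.mpr ⟨x, mem_filter.mpr ⟨hx, le_refl x⟩⟩
  exact_mod_cast this

lemma stMap_low {k m : ℕ} {A : Finset ℤ} (hA : A ⊆ Icc 1 ((k:ℤ)+(m:ℤ)))
    {i : ℤ} (hi : |i| ≤ (k:ℤ)) : stMap A i = stMap (Bp k A) i := by
  rcases abs_le.mp hi with ⟨h1, h2⟩
  unfold stMap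
  split_ifs with h
  · rw [rankIn_low (m := m) hA (by omega)]
  · rw [rankIn_low (m := m) hA (by omega)]

lemma stMap_shift {k m : ℕ} {A : Finset ℤ} (hA : A ⊆ Icc 1 ((k:ℤ)+(m:ℤ)))
    {i : ℤ} (hi : |i| ∈ Cp k m A) :
    stMap A (shiftZ k i) = shiftZ (Bp k A).card (stMap (Cp k m A) i) := by
  have hb := (mem_Cp.mp hi).2
  have hrank : 1 ≤ rankIn (Cp k m A) |i| := rank_pos hi
  rcases lt_trichotomy i 0 with h | h | h
  · rw [abs_of_neg h] at hrank
    have h1 : shiftZ k i = i - k := if_neg (by omega)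
    have h2 : stMap (Cp k m A) i = -(rankIn (Cp k m A) (-i)) := if_neg (by omega)
    have h3 : stMap A (i - k) = -(rankIn A (-(i - k))) := if_neg (by omega)
    have h4 : shiftZ (Bp k A).card (-(rankIn (Cp k m A) (-i)))
        = -(rankIn (Cp k m A) (-i)) - (Bp k A).card := if_neg (by omega)
    rw [h1, h2, h3, h4]
    have : -(i - (k:ℤ)) = (k:ℤ) + (-i) := by ring
    rw [this, rankIn_high hA (by omega)]
    ring
  · exfalso; rw [h] at hb; simp at hb
  · rw [abs_of_pos h] at hrank
    have h1 : shiftZ k i = i + k := if_pos h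
    have h2 : stMap (Cp k m A) i = rankIn (Cp k m A) i := if_pos h
    have h3 : stMap A (i + k) = rankIn A (i + k) := if_pos (by omega)
    have h4 : shiftZ (Bp k A).card (rankIn (Cp k m A) i)
        = rankIn (Cp k m A) i + (Bp k A).card := if_pos (by omega)
    rw [h1, h2, h3, h4]
    have : i + (k:ℤ) = (k:ℤ) + i := by ring
    rw [this, rankIn_high hA (by omega)]
    ring

lemma abs_shiftZ (k : ℕ) {i : ℤ} (hi : i ≠ 0) : |shiftZ k i| = |i| + k := by
  unfold shiftZ
  split_ifs with h
  · rw [abs_of_pos h, abs_of_pos (by omega)]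
  · have h' : i < 0 := by omega
    rw [abs_of_neg h', abs_of_neg (by omega)]; ring

lemma Bp_compl {k m : ℕ} {A : Finset ℤ} :
    Bp k (Icc 1 ((k:ℤ)+(m:ℤ)) \ A) = Icc 1 (k:ℤ) \ Bp k A := by
  ext x
  by_cases hx : x ∈ A <;>
    simp only [mem_Bp, mem_sdiff, mem_Icc, hx, not_true, not_false_iff,
      and_true, and_false, false_and, true_and] <;> constructor <;> intro h <;>
    first | omega | (exfalso; omega) | (constructor <;> omega) | tauto

lemma Cp_compl {k m : ℕ} {A : Finset ℤ} :
    Cp k m (Icc 1 ((k:ℤ)+(m:ℤ)) \ A) = Icc 1 (m:ℤ) \ Cp k m A := by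
  ext x
  rw [mem_Cp, mem_sdiff, mem_sdiff, mem_Cp, mem_Icc, mem_Icc]
  by_cases hx : (x + (k:ℤ)) ∈ A <;> simp [hx] <;> omega

lemma card_Bp_add_Cp {k m : ℕ} {A : Finset ℤ} (hA : A ⊆ Icc 1 ((k:ℤ)+(m:ℤ))) :
    (Bp k A).card + (Cp k m A).card = A.card := by
  have hsplit : A = Bp k A ∪ (A ∩ Icc ((k:ℤ)+1) ((k:ℤ)+(m:ℤ))) := by
    ext x
    by_cases hx : x ∈ A
    · have hb := mem_Icc.mp (hA hx)
      simp only [mem_union, mem_Bp, mem_inter, mem_Icc, hx, true_and, true_iff]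
      omega
    · simp [hx, mem_Bp]
  have hdisj : Disjoint (Bp k A) (A ∩ Icc ((k:ℤ)+1) ((k:ℤ)+(m:ℤ))) := by
    rw [disjoint_left]
    intro x hx hx'
    rw [mem_Bp] at hx
    simp only [mem_inter, mem_Icc] at hx'
    omega
  have hinj : Function.Injective (fun x : ℤ => x - (k:ℤ)) := fun a b h => by
    simpa using h
  have hc : (Cp k m A).card = (A ∩ Icc ((k:ℤ)+1) ((k:ℤ)+(m:ℤ))).card :=
    Finset.card_image_of_injective _ hinj
  conv_rhs => rw [hsplit]
  rw [card_union_of_disjoint hdisj, hc]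

lemma card_compl_Bp {k : ℕ} {A : Finset ℤ} :
    (Icc 1 (k:ℤ) \ Bp k A).card = k - (Bp k A).card := by
  rw [card_sdiff_of_subset Bp_subset, card_Icc_one_int]

lemma card_compl_Cp {k m : ℕ} {A : Finset ℤ} :
    (Icc 1 (m:ℤ) \ Cp k m A).card = m - (Cp k m A).card := by
  rw [card_sdiff_of_subset Cp_subset, card_Icc_one_int]



variable {F : Type*}

/-- Endpoint bound condition. -/
def Bnd (k : ℕ) (lam : Finset (Arc F)) : Prop :=
  ∀ t ∈ lam, 1 ≤ |t.1| ∧ |t.1| ≤ (k:ℤ) ∧ 1 ≤ |t.2.1| ∧ |t.2.1| ≤ (k:ℤ)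

variable {k m : ℕ} {A : Finset ℤ} {lam mu : Finset (Arc F)}

lemma memA_iff_memBp (hA : A ⊆ Icc 1 ((k:ℤ)+(m:ℤ))) {x : ℤ} (h1 : 1 ≤ x)
    (h2 : x ≤ (k:ℤ)) : x ∈ A ↔ x ∈ Bp k A := by
  rw [mem_Bp]; tauto

lemma memA_iff_memCp {x : ℤ} (h1 : 1 ≤ x) (h2 : x ≤ (m:ℤ)) :
    (x + (k:ℤ)) ∈ A ↔ x ∈ Cp k m A := by
  rw [mem_Cp]; tauto

lemma splits_iff (hA : A ⊆ Icc 1 ((k:ℤ)+(m:ℤ))) (hl : Bnd k lam) (hm : Bnd m mu) :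
    Splits A (lam ∪ shiftUp k mu) ↔ Splits (Bp k A) lam ∧ Splits (Cp k m A) mu := by
  constructor
  · intro h
    constructor
    · intro t ht
      obtain ⟨b1, b2, b3, b4⟩ := hl t ht
      have := h t (mem_union_left _ ht)
      rw [← memA_iff_memBp hA b1 b2, ← memA_iff_memBp hA b3 b4]
      exact this
    · intro t ht
      obtain ⟨b1, b2, b3, b4⟩ := hm t ht
      have hst := h (shiftArc k t) (mem_union_right _ (mem_image_of_mem _ ht))
      have e1 : |(shiftArc k t : Arc F).1| = |t.1| + k := abs_shiftZ k (abs_pos.mp (by omega))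
      have e2 : |(shiftArc k t : Arc F).2.1| = |t.2.1| + k := abs_shiftZ k (abs_pos.mp (by omega))
      rw [e1, e2] at hst
      rw [← memA_iff_memCp b1 b2, ← memA_iff_memCp b3 b4]
      exact hst
  · rintro ⟨h1, h2⟩ t ht
    rcases mem_union.mp ht with ht | ht
    · obtain ⟨b1, b2, b3, b4⟩ := hl t ht
      rw [memA_iff_memBp hA b1 b2, memA_iff_memBp hA b3 b4]
      exact h1 t ht
    · obtain ⟨s, hs, rfl⟩ := mem_image.mp ht
      obtain ⟨b1, b2, b3, b4⟩ := hm s hs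
      have e1 : |(shiftArc k s : Arc F).1| = |s.1| + k := abs_shiftZ k (abs_pos.mp (by omega))
      have e2 : |(shiftArc k s : Arc F).2.1| = |s.2.1| + k := abs_shiftZ k (abs_pos.mp (by omega))
      rw [e1, e2, memA_iff_memCp b1 b2, memA_iff_memCp b3 b4]
      exact h2 s hs

lemma restrict_union (hA : A ⊆ Icc 1 ((k:ℤ)+(m:ℤ))) (hl : Bnd k lam) (hm : Bnd m mu) :
    restrictTo A (lam ∪ shiftUp k mu)
      = restrictTo (Bp k A) lam ∪ shiftUp k (restrictTo (Cp k m A) mu) := by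
  unfold restrictTo shiftUp
  rw [filter_union]
  congr 1
  · apply filter_congr
    intro t ht
    obtain ⟨b1, b2, b3, b4⟩ := hl t ht
    rw [memA_iff_memBp hA b1 b2, memA_iff_memBp hA b3 b4]
  · rw [Finset.filter_image]
    congr 1
    apply filter_congr
    intro t ht
    obtain ⟨b1, b2, b3, b4⟩ := hm t ht
    have e1 : |(shiftArc k t : Arc F).1| = |t.1| + k := abs_shiftZ k (abs_pos.mp (by omega))
    have e2 : |(shiftArc k t : Arc F).2.1| = |t.2.1| + k := abs_shiftZ k (abs_pos.mp (by omega))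
    rw [e1, e2, memA_iff_memCp b1 b2, memA_iff_memCp b3 b4]

lemma standardize_union (hA : A ⊆ Icc 1 ((k:ℤ)+(m:ℤ))) (hl : Bnd k lam) (hm : Bnd m mu) :
    standardize A (restrictTo (Bp k A) lam ∪ shiftUp k (restrictTo (Cp k m A) mu))
      = standardize (Bp k A) (restrictTo (Bp k A) lam)
          ∪ shiftUp (Bp k A).card (standardize (Cp k m A) (restrictTo (Cp k m A) mu)) := by
  unfold standardize shiftUp
  rw [image_union]
  congr 1
  · apply Finset.image_congr
    intro t ht
    rw [Finset.mem_coe, restrictTo, mem_filter] at ht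
    obtain ⟨b1, b2, b3, b4⟩ := hl t ht.1
    unfold stArc
    rw [stMap_low hA b2, stMap_low hA b4]
  · rw [Finset.image_image, Finset.image_image]
    apply Finset.image_congr
    intro t ht
    rw [Finset.mem_coe, restrictTo, mem_filter] at ht
    obtain ⟨hc1, hc2⟩ := ht.2
    simp only [Function.comp_apply]
    unfold stArc shiftArc
    simp only
    rw [stMap_shift hA hc1, stMap_shift hA hc2]


variable {k m : ℕ} {A B C : Finset ℤ}

lemma j_subset (hB : B ⊆ Icc 1 (k:ℤ)) (hC : C ⊆ Icc 1 (m:ℤ)) :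
    B ∪ C.image (· + (k:ℤ)) ⊆ Icc 1 ((k:ℤ)+(m:ℤ)) := by
  intro x hx
  rcases mem_union.mp hx with h | h
  · have := mem_Icc.mp (hB h); rw [mem_Icc]; omega
  · obtain ⟨y, hy, rfl⟩ := mem_image.mp h
    have := mem_Icc.mp (hC hy); rw [mem_Icc]; omega

lemma Bp_j (hB : B ⊆ Icc 1 (k:ℤ)) (hC : C ⊆ Icc 1 (m:ℤ)) :
    Bp k (B ∪ C.image (· + (k:ℤ))) = B := by
  ext x
  rw [mem_Bp, mem_union, mem_image]
  constructor
  · rintro ⟨h | ⟨y, hy, rfl⟩, h1, h2⟩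
    · exact h
    · have := mem_Icc.mp (hC hy); omega
  · intro h
    have := mem_Icc.mp (hB h)
    exact ⟨Or.inl h, this.1, this.2⟩

lemma Cp_j (hB : B ⊆ Icc 1 (k:ℤ)) (hC : C ⊆ Icc 1 (m:ℤ)) :
    Cp k m (B ∪ C.image (· + (k:ℤ))) = C := by
  ext x
  rw [mem_Cp, mem_union, mem_image]
  constructor
  · rintro ⟨h | ⟨y, hy, hxy⟩, h1, h2⟩
    · have := mem_Icc.mp (hB h); omega
    · have : y = x := by omega
      rwa [← this]
  · intro h
    have := mem_Icc.mp (hC h)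
    exact ⟨Or.inr ⟨x, h, rfl⟩, this.1, this.2⟩

lemma ji (hA : A ⊆ Icc 1 ((k:ℤ)+(m:ℤ))) :
    Bp k A ∪ (Cp k m A).image (· + (k:ℤ)) = A := by
  ext x
  rw [mem_union, mem_image]
  constructor
  · rintro (h | ⟨y, hy, rfl⟩)
    · exact (mem_Bp.mp h).1
    · exact (mem_Cp.mp hy).1
  · intro h
    have hb := mem_Icc.mp (hA h)
    by_cases hk : x ≤ (k:ℤ)
    · exact Or.inl (mem_Bp.mpr ⟨h, hb.1, hk⟩)
    · exact Or.inr ⟨x - k, mem_Cp.mpr ⟨by simpa using h, by omega, by omega⟩, by ring⟩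

end DeltaPAux

variable (F : Type*) [Field F] [Fintype F]

/-- All possible labelled arcs on `[±n]`. -/
def allArcs (n : ℕ) : Finset (Arc F) :=
  Icc (-(n : ℤ)) (n : ℤ) ×ˢ Icc (-(n : ℤ)) (n : ℤ) ×ˢ (Finset.univ : Finset F)

/-- `SC^D = ⊕_{n ≥ 0} SC^D_{2n}`: the free graded `ℂ`-vector space with basis
`{κ_λ : λ ∈ D_{2n}(q), n ≥ 0}`. -/
abbrev SCtot := (Σ n : ℕ, {lam : Finset (Arc F) // IsDPartition n lam}) →₀ ℂ

/-- `P_λ = Σ_{μ ≥ λ} κ_μ ∈ SC^D_{2n}`, where `μ` runs over the `D_{2n}(q)`-partitions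
whose arc set contains the arc set of `λ`. -/
def Pelt (n : ℕ) (lam : Finset (Arc F)) : SCtot F :=
  ∑ mu ∈ (allArcs F n).powerset,
    if h : IsDPartition n mu ∧ lam ⊆ mu then
      Finsupp.single ⟨n, ⟨mu, h.1⟩⟩ (1 : ℂ) else 0

open scoped TensorProduct

noncomputable instance : Zero (SCtot F ⊗[ℂ] SCtot F) :=
  (inferInstance : AddCommMonoid (SCtot F ⊗[ℂ] SCtot F)).toAddMonoid.toZero

/-- The coproduct on the `P`-basis:
`Δ(P_λ) = Σ_{A ⊆ [n], λ = λ|_A ⊔ λ|_{Aᶜ}} P_{st_A(λ|_A)} ⊗ P_{st_{Aᶜ}(λ|_{Aᶜ})}`. -/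
def DeltaP (n : ℕ) (lam : Finset (Arc F)) : SCtot F ⊗[ℂ] SCtot F :=
  ∑ A ∈ (Icc 1 (n : ℤ)).powerset,
    if Splits A lam then
      Pelt F A.card (standardize A (restrictTo A lam)) ⊗ₜ[ℂ]
        Pelt F (n - A.card)
          (standardize (Icc 1 (n : ℤ) \ A) (restrictTo (Icc 1 (n : ℤ) \ A) lam))
    else 0

/-- compatibility of product and coproduct on the `P`-basis:
`Δ(P_λ · P_μ) = Δ(P_λ) · Δ(P_μ)` for `λ ∈ D_{2k}(q)`, `μ ∈ D_{2m}(q)`, where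
`P_λ · P_μ = P_{λ ⊔ μ↑^k}` and the product on `SC^D ⊗ SC^D` is componentwise (so the
right-hand side is the double sum of componentwise products of `P`-basis elements).
This is the bialgebra compatibility making `SC^D` a graded connected bialgebra, hence
a Hopf algebra. -/
theorem DeltaP_mul_compat (k m : ℕ) (lam mu : Finset (Arc F))
    (hlam : IsDPartition k lam) (hmu : IsDPartition m mu) :
    DeltaP F (k + m) (lam ∪ shiftUp k mu)
      = ∑ B ∈ (Icc 1 (k : ℤ)).powerset, ∑ C ∈ (Icc 1 (m : ℤ)).powerset,
          if Splits B lam ∧ Splits C mu then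
            Pelt F (B.card + C.card)
              (standardize B (restrictTo B lam) ∪
                shiftUp B.card (standardize C (restrictTo C mu))) ⊗ₜ[ℂ]
            Pelt F ((k - B.card) + (m - C.card))
              (standardize (Icc 1 (k : ℤ) \ B) (restrictTo (Icc 1 (k : ℤ) \ B) lam) ∪
                shiftUp (k - B.card)
                  (standardize (Icc 1 (m : ℤ) \ C) (restrictTo (Icc 1 (m : ℤ) \ C) mu)))
          else 0 := by
  classical
  have hl : DeltaPAux.Bnd k lam := by
    rintro ⟨i, j, a⟩ ht
    obtain ⟨h1, h2, h3, h4, -⟩ := hlam i j a ht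
    exact ⟨h1, h2, h3, h4⟩
  have hm : DeltaPAux.Bnd m mu := by
    rintro ⟨i, j, a⟩ ht
    obtain ⟨h1, h2, h3, h4, -⟩ := hmu i j a ht
    exact ⟨h1, h2, h3, h4⟩
  rw [DeltaP]
  simp only [Nat.cast_add]
  rw [← Finset.sum_product']
  apply Finset.sum_nbij' (i := fun A => (DeltaPAux.Bp k A, DeltaPAux.Cp k m A))
    (j := fun p => p.1 ∪ p.2.image (· + (k:ℤ)))
  · intro A hA
    rw [Finset.mem_product, mem_powerset, mem_powerset]
    exact ⟨DeltaPAux.Bp_subset, DeltaPAux.Cp_subset⟩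
  · intro p hp
    rw [Finset.mem_product, mem_powerset, mem_powerset] at hp
    exact mem_powerset.mpr (DeltaPAux.j_subset hp.1 hp.2)
  · intro A hA
    exact DeltaPAux.ji (mem_powerset.mp hA)
  · intro p hp
    rw [Finset.mem_product, mem_powerset, mem_powerset] at hp
    exact Prod.ext (DeltaPAux.Bp_j hp.1 hp.2) (DeltaPAux.Cp_j hp.1 hp.2)
  · intro A hA'
    have hA : A ⊆ Icc 1 ((k:ℤ)+(m:ℤ)) := mem_powerset.mp hA'
    have hA2 : Icc 1 ((k:ℤ)+(m:ℤ)) \ A ⊆ Icc 1 ((k:ℤ)+(m:ℤ)) := sdiff_subset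
    have hck : (DeltaPAux.Bp k A).card ≤ k := DeltaPAux.cardBp_le
    have hcm : (DeltaPAux.Cp k m A).card ≤ m := DeltaPAux.cardCp_le
    have hcA : (DeltaPAux.Bp k A).card + (DeltaPAux.Cp k m A).card = A.card :=
      DeltaPAux.card_Bp_add_Cp hA
    by_cases hsp : Splits (DeltaPAux.Bp k A) lam ∧ Splits (DeltaPAux.Cp k m A) mu
    · rw [if_pos ((DeltaPAux.splits_iff hA hl hm).mpr hsp), if_pos hsp]
      rw [DeltaPAux.restrict_union hA hl hm, DeltaPAux.standardize_union hA hl hm]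
      rw [DeltaPAux.restrict_union hA2 hl hm, DeltaPAux.standardize_union hA2 hl hm]
      rw [DeltaPAux.Bp_compl (m := m), DeltaPAux.Cp_compl]
      rw [DeltaPAux.card_compl_Bp]
      have hn1 : A.card = (DeltaPAux.Bp k A).card + (DeltaPAux.Cp k m A).card := hcA.symm
      have hn2 : k + m - A.card
          = (k - (DeltaPAux.Bp k A).card) + (m - (DeltaPAux.Cp k m A).card) := by omega
      rw [hn2, hn1]
    · rw [if_neg, if_neg hsp]
      intro hcon
      exact hsp ((DeltaPAux.splits_iff hA hl hm).mp hcon)
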